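/- arXiv:2506.02867 — 3 statements merged into one kernel-verified Lean document; each statement's English description precedes it below -/
import Mathlib

section
/- Let y, h_1, …, h_T be jointly distributed discrete random variables on a common probability space, where y takes values in a finite set 𝒴 and each h_j takes values in a finite set. Define the Bayes error p_e = ∑_z P((h_1,…,h_T) = z) · ( 1 − max_{i ∈ 𝒴} P(y = i | (h_1,…,h_T) = z) ), the sum ranging over z with P((h_1,…,h_T)=z) > 0. Then p_e ≤ (1/2) · [ H(y) − ∑_{j=1}^{T} I(y; h_j | h_1, …, h_{j−1}) ], where for j = 1 the conditional mutual information I(y; h_1 | ∅) is understood as I(y; h_1); equivalently, p_e ≤ (1/2) · H(y | (h_1, …, h_T)). -/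
/-!  Self-contained finite-probability setup.

A finite probability space is given by a mass function `μ : Ω → ℝ` on a `Fintype Ω`
with `∀ ω, 0 ≤ μ ω` and `∑ ω, μ ω = 1`.  All logarithms are base 2; the conventions
`0 · log₂ 0 = 0` and `x / 0 = 0` agree with Lean's `Real.logb 2 0 = 0` and division. -/

-- Probability of the event `{ω | p ω}` under the mass function `μ`.
open Classical in
noncomputable def pr {Ω : Type*} [Fintype Ω] (μ : Ω → ℝ) (p : Ω → Prop) : ℝ :=
  ∑ ω, if p ω then μ ω else 0

/-- Shannon entropy (base 2) of the discrete random variable `X`. -/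
noncomputable def entropy {Ω α : Type*} [Fintype Ω] [Fintype α]
    (μ : Ω → ℝ) (X : Ω → α) : ℝ :=
  -∑ a, pr μ (fun ω => X ω = a) * Real.logb 2 (pr μ (fun ω => X ω = a))

/-- Conditional entropy `H(X | Y) = ∑_b P(Y = b) · H(X | Y = b)`, where the conditional
distribution is `P(X = a | Y = b) = P(X = a ∧ Y = b) / P(Y = b)`. -/
noncomputable def condEntropy {Ω α β : Type*} [Fintype Ω] [Fintype α] [Fintype β]
    (μ : Ω → ℝ) (X : Ω → α) (Y : Ω → β) : ℝ :=
  ∑ b, pr μ (fun ω => Y ω = b) *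
    (-∑ a,
      (pr μ (fun ω => X ω = a ∧ Y ω = b) / pr μ (fun ω => Y ω = b)) *
        Real.logb 2 (pr μ (fun ω => X ω = a ∧ Y ω = b) / pr μ (fun ω => Y ω = b)))

/-- Mutual information `I(X ; Y) = H(X) − H(X | Y)`. -/
noncomputable def mutualInfo {Ω α β : Type*} [Fintype Ω] [Fintype α] [Fintype β]
    (μ : Ω → ℝ) (X : Ω → α) (Y : Ω → β) : ℝ :=
  entropy μ X - condEntropy μ X Y

/-- Conditional mutual information `I(X ; Y | Z) = H(X | Z) − H(X | (Y, Z))`. -/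
noncomputable def condMutualInfo {Ω α β γ : Type*}
    [Fintype Ω] [Fintype α] [Fintype β] [Fintype γ]
    (μ : Ω → ℝ) (X : Ω → α) (Y : Ω → β) (Z : Ω → γ) : ℝ :=
  condEntropy μ X Z - condEntropy μ X (fun ω => (Y ω, Z ω))

/-- Binary entropy function `H_b(p) = −p log₂ p − (1 − p) log₂ (1 − p)`. -/
noncomputable def binEntropy (p : ℝ) : ℝ :=
  -(p * Real.logb 2 p) - (1 - p) * Real.logb 2 (1 - p)

-- auxiliary lemmas
section Aux
open Real Finset

lemma nml_low' {t : ℝ} (h0 : 0 ≤ t) (h1 : t ≤ 1/2) : t * Real.log 2 ≤ Real.negMulLog t := by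
  rcases eq_or_lt_of_le h0 with h|h
  · simp [← h, Real.negMulLog_zero]
  · rw [Real.negMulLog, neg_mul, ← mul_neg, ← Real.log_inv]
    apply mul_le_mul_of_nonneg_left _ h.le
    apply Real.log_le_log (by norm_num)
    rw [le_inv_comm₀ (by norm_num) h]
    linarith

lemma nml_half' : Real.negMulLog (1/2) = (1/2) * Real.log 2 := by
  rw [Real.negMulLog, one_div, Real.log_inv]; ring

lemma nml_high' {s : ℝ} (h0 : 1/2 ≤ s) (h1 : s ≤ 1) : (1 - s) * Real.log 2 ≤ Real.negMulLog s := by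
  have hc := Real.strictConcaveOn_negMulLog.concaveOn
  have key := hc.2 (Set.mem_Ici.2 (by norm_num : (0:ℝ) ≤ 1/2)) (Set.mem_Ici.2 (by norm_num : (0:ℝ) ≤ 1))
    (show (0:ℝ) ≤ 2 - 2*s by linarith) (show (0:ℝ) ≤ 2*s - 1 by linarith) (by ring)
  have h2 : (2 - 2*s) • ((1:ℝ)/2) + (2*s - 1) • (1:ℝ) = s := by simp only [smul_eq_mul]; ring
  rw [h2] at key
  calc (1 - s) * Real.log 2
      = (2 - 2*s) • Real.negMulLog (1/2) + (2*s - 1) • Real.negMulLog 1 := by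
        rw [nml_half', Real.negMulLog_one]; simp only [smul_eq_mul]; ring
    _ ≤ _ := key

/-- The pointwise Fano-type inequality `2 ln 2 (1 − max q) ≤ ∑ negMulLog qᵢ`. -/
lemma fano_core {𝒴 : Type*} [Fintype 𝒴] [Nonempty 𝒴] (q : 𝒴 → ℝ)
    (h0 : ∀ i, 0 ≤ q i) (h1 : ∑ i, q i = 1) :
    2 * Real.log 2 * (1 - Finset.univ.sup' Finset.univ_nonempty q) ≤ ∑ i, Real.negMulLog (q i) := by
  classical
  obtain ⟨i₀, -, hi₀⟩ := Finset.exists_mem_eq_sup' (Finset.univ_nonempty (α := 𝒴)) q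
  set p := Finset.univ.sup' Finset.univ_nonempty q with hp
  have hle : ∀ i, q i ≤ p := fun i => Finset.le_sup' q (Finset.mem_univ i)
  have hp1 : p ≤ 1 := by
    rw [hi₀]
    calc q i₀ ≤ ∑ i, q i := Finset.single_le_sum (fun i _ => h0 i) (Finset.mem_univ i₀)
      _ = 1 := h1
  have hppos : 0 < p := by
    by_contra hc
    push_neg at hc
    have : ∑ i, q i ≤ 0 := Finset.sum_nonpos (fun i _ => (hle i).trans hc)
    linarith
  have hrest : ∑ i ∈ Finset.univ.erase i₀, q i = 1 - p := by
    have := Finset.add_sum_erase Finset.univ q (Finset.mem_univ i₀)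
    rw [h1] at this; rw [hi₀]; linarith
  by_cases hcase : 1/2 ≤ p
  · have key : Real.negMulLog p + Real.negMulLog (1 - p) ≤ ∑ i, Real.negMulLog (q i) := by
      rw [← Finset.add_sum_erase Finset.univ (fun i => Real.negMulLog (q i)) (Finset.mem_univ i₀),
        ← hi₀]
      refine add_le_add le_rfl ?_
      have hsplit : Real.negMulLog (1 - p)
          = ∑ i ∈ Finset.univ.erase i₀, q i * (- Real.log (1 - p)) := by
        rw [← Finset.sum_mul, hrest, Real.negMulLog]; ring
      rw [hsplit]
      apply Finset.sum_le_sum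
      intro i hi
      rcases eq_or_lt_of_le (h0 i) with hq|hq
      · simp [← hq, Real.negMulLog_zero]
      · rw [Real.negMulLog, neg_mul, ← mul_neg]
        apply mul_le_mul_of_nonneg_left _ (h0 i)
        apply neg_le_neg
        apply Real.log_le_log hq
        have : q i ≤ ∑ j ∈ Finset.univ.erase i₀, q j :=
          Finset.single_le_sum (fun j _ => h0 j) hi
        linarith [hrest]
    have b1 := nml_high' hcase hp1
    have b2 := nml_low' (t := 1 - p) (by linarith) (by linarith)
    linarith
  · push_neg at hcase
    have key : - Real.log p ≤ ∑ i, Real.negMulLog (q i) := by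
      have hrw : - Real.log p = ∑ i, q i * (- Real.log p) := by
        rw [← Finset.sum_mul, h1, one_mul]
      rw [hrw]
      apply Finset.sum_le_sum
      intro i _
      rcases eq_or_lt_of_le (h0 i) with hq|hq
      · simp [← hq, Real.negMulLog_zero]
      · rw [Real.negMulLog, neg_mul, ← mul_neg]
        exact mul_le_mul_of_nonneg_left (neg_le_neg (Real.log_le_log hq (hle i))) (h0 i)
    have hlog2 : Real.log 2 ≤ 1 := by
      have := Real.log_le_sub_one_of_pos (x := 2) (by norm_num)
      linarith
    have h2p : Real.log (2 * p) ≤ 2 * p - 1 := Real.log_le_sub_one_of_pos (by linarith)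
    have hsum : Real.log (2 * p) = Real.log 2 + Real.log p :=
      Real.log_mul (by norm_num) (ne_of_gt hppos)
    have hlog2pos : (0:ℝ) < Real.log 2 := Real.log_pos (by norm_num)
    nlinarith [key]

lemma pr_congr' {Ω : Type*} [Fintype Ω] (μ : Ω → ℝ) {p q : Ω → Prop}
    (h : ∀ ω, p ω ↔ q ω) : pr μ p = pr μ q := by
  have : p = q := funext fun ω => propext (h ω)
  rw [this]

lemma pr_nonneg' {Ω : Type*} [Fintype Ω] {μ : Ω → ℝ} (hμ0 : ∀ ω, 0 ≤ μ ω) (p : Ω → Prop) :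
    0 ≤ pr μ p := by
  unfold pr; apply Finset.sum_nonneg; intro ω _
  split <;> simp [hμ0 ω]

lemma pr_true' {Ω : Type*} [Fintype Ω] {μ : Ω → ℝ} (hμ1 : ∑ ω, μ ω = 1) :
    pr μ (fun _ => True) = 1 := by
  unfold pr; simpa using hμ1

lemma sum_pr_and' {Ω α : Type*} [Fintype Ω] [Fintype α] (μ : Ω → ℝ) (X : Ω → α) (p : Ω → Prop) :
    ∑ a, pr μ (fun ω => X ω = a ∧ p ω) = pr μ p := by
  classical
  unfold pr
  rw [Finset.sum_comm]
  apply Finset.sum_congr rfl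
  intro ω _
  by_cases hp : p ω <;> simp [hp]

lemma condEntropy_comp_equiv' {Ω α β γ : Type*} [Fintype Ω] [Fintype α] [Fintype β] [Fintype γ]
    (μ : Ω → ℝ) (X : Ω → α) (Y : Ω → β) (e : β ≃ γ) :
    condEntropy μ X (fun ω => e (Y ω)) = condEntropy μ X Y := by
  unfold condEntropy
  rw [← Equiv.sum_comp e]
  apply Finset.sum_congr rfl
  intro b _
  have h1 : pr μ (fun ω => e (Y ω) = e b) = pr μ (fun ω => Y ω = b) :=
    pr_congr' μ (fun ω => by simp)
  have h2 : ∀ a, pr μ (fun ω => X ω = a ∧ e (Y ω) = e b) = pr μ (fun ω => X ω = a ∧ Y ω = b) :=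
    fun a => pr_congr' μ (fun ω => by simp)
  beta_reduce
  rw [h1]
  congr 2
  apply Finset.sum_congr rfl
  intro a _
  rw [h2 a]

lemma condEntropy_unique' {Ω α β : Type*} [Fintype Ω] [Fintype α] [Fintype β] [Unique β]
    (μ : Ω → ℝ) (hμ1 : ∑ ω, μ ω = 1) (X : Ω → α) (Y : Ω → β) :
    condEntropy μ X Y = entropy μ X := by
  unfold condEntropy entropy
  rw [Fintype.sum_unique]
  have h1 : pr μ (fun ω => Y ω = default) = 1 := by
    have : pr μ (fun ω => Y ω = default) = pr μ (fun _ => True) := by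
      apply pr_congr'; intro ω; simp [Subsingleton.elim (Y ω) default]
    rw [this]; exact pr_true' hμ1
  rw [h1]
  have h2 : ∀ a, pr μ (fun ω => X ω = a ∧ Y ω = default) = pr μ (fun ω => X ω = a) := by
    intro a; apply pr_congr'; intro ω; simp [Subsingleton.elim (Y ω) default]
  simp [h2]

end Aux

/- STATEMENT 1: Let `y, h₁, …, h_T` be jointly distributed discrete random variables, `y`
valued in a finite set `𝒴` and each `h_j` in a finite set.  The Bayes error
`p_e = ∑_{z : P((h₁,…,h_T)=z) > 0} P((h₁,…,h_T) = z) · (1 − max_{i ∈ 𝒴} P(y = i | (h₁,…,h_T) = z))`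
satisfies `p_e ≤ (1/2) · [H(y) − ∑_{j=1}^T I(y; h_j | h₁, …, h_{j−1})]`, where for `j = 1`
the condition is the empty tuple, i.e. the term is `I(y; h₁)`.  (`𝒴` is nonempty since `y`
takes values in it and the total mass is `1`.) -/
open Classical in
theorem bayes_error_le_half_entropy_sub_chain
    {Ω 𝒴 : Type*} [Fintype Ω] [Fintype 𝒴] [Nonempty 𝒴]
    (μ : Ω → ℝ) (hμ0 : ∀ ω, 0 ≤ μ ω) (hμ1 : ∑ ω, μ ω = 1)
    (T : ℕ) (β : Fin T → Type*) [∀ j, Fintype (β j)]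
    (h : ∀ j : Fin T, Ω → β j)
    (y : Ω → 𝒴) :
    ∑ z ∈ Finset.univ.filter
        (fun z : ∀ j : Fin T, β j => 0 < pr μ (fun ω => (fun j => h j ω) = z)),
        pr μ (fun ω => (fun j => h j ω) = z) *
          (1 - Finset.univ.sup' Finset.univ_nonempty (fun i : 𝒴 =>
            pr μ (fun ω => y ω = i ∧ (fun j => h j ω) = z) /
              pr μ (fun ω => (fun j => h j ω) = z))) ≤
      (1 / 2) *
        (entropy μ y
          - ∑ j : Fin T, condMutualInfo μ y (h j)
              (fun ω => fun i : Fin j.val => h (Fin.castLE j.isLt.le i) ω)) := by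
  classical
  -- Step 1: the right-hand side equals (1/2) · H(y | (h₁,…,h_T)).
  set Z : Ω → (∀ j : Fin T, β j) := fun ω => fun j => h j ω with hZ
  have hstruct : entropy μ y
      - ∑ j : Fin T, condMutualInfo μ y (h j)
          (fun ω => fun i : Fin j.val => h (Fin.castLE j.isLt.le i) ω)
      = condEntropy μ y Z := by
    set G : ℕ → ℝ := fun n => if hn : n ≤ T then
        condEntropy μ y (fun ω => fun i : Fin n => h (Fin.castLE hn i) ω) else 0 with hG
    have hterm : ∀ j : Fin T, condMutualInfo μ y (h j)
        (fun ω => fun i : Fin j.val => h (Fin.castLE j.isLt.le i) ω)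
        = G j.val - G (j.val + 1) := by
      intro j
      have hj1 : j.val + 1 ≤ T := j.isLt
      have hjle : j.val ≤ T := j.isLt.le
      rw [hG]
      simp only [dif_pos hj1, dif_pos hjle]
      unfold condMutualInfo
      congr 1
      set e := Fin.snocEquiv (fun i : Fin (j.val + 1) => β (Fin.castLE hj1 i)) with he
      have key : (fun ω => fun i : Fin (j.val + 1) => h (Fin.castLE hj1 i) ω)
          = fun ω => e (h j ω, fun i : Fin j.val => h (Fin.castLE j.isLt.le i) ω) := by
        funext ω
        show _ = Fin.snoc _ _
        funext i
        refine Fin.lastCases ?_ ?_ i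
        · rw [Fin.snoc_last]; rfl
        · intro k
          rw [Fin.snoc_castSucc]; rfl
      rw [← condEntropy_comp_equiv' μ y
        (fun ω => (h j ω, fun i : Fin j.val => h (Fin.castLE j.isLt.le i) ω)) e]
      exact congrArg (condEntropy μ y) key.symm
    rw [Finset.sum_congr rfl (fun j _ => hterm j)]
    have hts : ∑ j : Fin T, (G j.val - G (j.val + 1))
        = ∑ i ∈ Finset.range T, (G i - G (i+1)) :=
      Fin.sum_univ_eq_sum_range (fun n => G n - G (n+1)) T
    rw [hts, Finset.sum_range_sub' G T]
    have hG0 : G 0 = entropy μ y := by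
      rw [hG]; simp only [dif_pos (Nat.zero_le T)]
      exact condEntropy_unique' μ hμ1 y _
    have hGT : G T = condEntropy μ y Z := by
      rw [hG]; simp only [dif_pos (le_refl T)]
      rfl
    rw [hG0, hGT]
    ring
  rw [hstruct]
  -- Step 2: termwise Fano inequality.
  have hlog2pos : (0:ℝ) < Real.log 2 := Real.log_pos (by norm_num)
  unfold condEntropy
  rw [Finset.mul_sum]
  calc ∑ z ∈ Finset.univ.filter
        (fun z : ∀ j : Fin T, β j => 0 < pr μ (fun ω => (fun j => h j ω) = z)),
        pr μ (fun ω => (fun j => h j ω) = z) *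
          (1 - Finset.univ.sup' Finset.univ_nonempty (fun i : 𝒴 =>
            pr μ (fun ω => y ω = i ∧ (fun j => h j ω) = z) /
              pr μ (fun ω => (fun j => h j ω) = z)))
      ≤ ∑ z ∈ Finset.univ.filter
        (fun z : ∀ j : Fin T, β j => 0 < pr μ (fun ω => (fun j => h j ω) = z)),
        1 / 2 * (pr μ (fun ω => Z ω = z) *
          (-∑ a, pr μ (fun ω => y ω = a ∧ Z ω = z) / pr μ (fun ω => Z ω = z) *
            Real.logb 2 (pr μ (fun ω => y ω = a ∧ Z ω = z) / pr μ (fun ω => Z ω = z)))) := by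
        apply Finset.sum_le_sum
        intro z hz
        rw [Finset.mem_filter] at hz
        have hzpos : 0 < pr μ (fun ω => Z ω = z) := hz.2
        set q : 𝒴 → ℝ := fun a =>
          pr μ (fun ω => y ω = a ∧ Z ω = z) / pr μ (fun ω => Z ω = z) with hq
        have hq0 : ∀ a, 0 ≤ q a := fun a =>
          div_nonneg (pr_nonneg' hμ0 _) hzpos.le
        have hq1 : ∑ a, q a = 1 := by
          rw [hq, ← Finset.sum_div, sum_pr_and' μ y (fun ω => Z ω = z), div_self (ne_of_gt hzpos)]
        have hcore := fano_core q hq0 hq1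
        have hinner : (-∑ a, q a * Real.logb 2 (q a))
            = (∑ a, Real.negMulLog (q a)) / Real.log 2 := by
          rw [← Finset.sum_neg_distrib, Finset.sum_div]
          apply Finset.sum_congr rfl
          intro a _
          rw [Real.logb, Real.negMulLog]
          field_simp
        have hfano : 1 - Finset.univ.sup' Finset.univ_nonempty q
            ≤ 1 / 2 * (-∑ a, q a * Real.logb 2 (q a)) := by
          rw [hinner]
          have hrw : 1 / 2 * ((∑ a, Real.negMulLog (q a)) / Real.log 2)
              = (∑ a, Real.negMulLog (q a)) / (2 * Real.log 2) := by
            field_simp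
          rw [hrw, le_div_iff₀ (by positivity)]
          nlinarith [hcore]
        calc pr μ (fun ω => Z ω = z) *
              (1 - Finset.univ.sup' Finset.univ_nonempty q)
            ≤ pr μ (fun ω => Z ω = z) *
              (1 / 2 * (-∑ a, q a * Real.logb 2 (q a))) :=
              mul_le_mul_of_nonneg_left hfano hzpos.le
          _ = 1 / 2 * (pr μ (fun ω => Z ω = z) *
              (-∑ a, q a * Real.logb 2 (q a))) := by ring
    _ ≤ ∑ z : (∀ j : Fin T, β j),
        1 / 2 * (pr μ (fun ω => Z ω = z) *
          (-∑ a, pr μ (fun ω => y ω = a ∧ Z ω = z) / pr μ (fun ω => Z ω = z) *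
            Real.logb 2 (pr μ (fun ω => y ω = a ∧ Z ω = z) / pr μ (fun ω => Z ω = z)))) := by
        apply Finset.sum_le_sum_of_subset_of_nonneg (Finset.filter_subset _ _)
        intro z _ hz
        rw [Finset.mem_filter] at hz
        push_neg at hz
        have h0 : pr μ (fun ω => Z ω = z) = 0 :=
          le_antisymm (hz (Finset.mem_univ z)) (pr_nonneg' hμ0 _)
        rw [h0]
        ring_nf
        exact le_refl 0
end

section
/- For every real number p with 0 ≤ p ≤ 1, min{p, 1 − p} ≤ (1/2) · ( −p·log₂ p − (1−p)·log₂(1−p) ), i.e., min{p, 1−p} ≤ (1/2)·H_b(p). -/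
open Real

lemma key_binEntropy (p : ℝ) (h0 : 0 ≤ p) (h1 : p ≤ 1/2) :
    2 * Real.log 2 * p ≤ Real.binEntropy p := by
  have hc := Real.strictConcave_binEntropy.concaveOn
  have h := hc.2 (show (0:ℝ) ∈ Set.Icc (0:ℝ) 1 by norm_num)
    (show (2:ℝ)⁻¹ ∈ Set.Icc (0:ℝ) 1 by norm_num)
    (show (0:ℝ) ≤ 1 - 2*p by linarith) (show (0:ℝ) ≤ 2*p by linarith)
    (show (1 - 2*p) + 2*p = 1 by ring)
  simp only [smul_eq_mul, mul_zero, zero_add, Real.binEntropy_zero,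
    Real.binEntropy_two_inv] at h
  have e : (2*p) * 2⁻¹ = p := by ring
  rw [e] at h
  linarith

lemma entropy_rewrite (p : ℝ) :
    -(p * Real.logb 2 p) - (1 - p) * Real.logb 2 (1 - p)
      = Real.binEntropy p / Real.log 2 := by
  rw [Real.binEntropy, Real.logb, Real.logb, Real.log_inv, Real.log_inv]
  ring

/-- For every real `p` with `0 ≤ p ≤ 1`,
`min {p, 1 − p} ≤ (1/2) · (−p log₂ p − (1 − p) log₂ (1 − p)) = (1/2) · H_b(p)`
(with the convention `0 · log₂ 0 = 0`, which agrees with Lean's `Real.logb 2 0 = 0`). -/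
theorem min_le_half_binEntropy (p : ℝ) (h0 : 0 ≤ p) (h1 : p ≤ 1) :
    min p (1 - p) ≤
      (1 / 2) * (-(p * Real.logb 2 p) - (1 - p) * Real.logb 2 (1 - p)) := by
  rw [entropy_rewrite]
  have hlog : (0:ℝ) < Real.log 2 := Real.log_pos (by norm_num)
  rw [show (1:ℝ)/2 * (Real.binEntropy p / Real.log 2)
      = Real.binEntropy p / (2 * Real.log 2) by ring,
    le_div_iff₀ (by positivity)]
  rcases le_total p (1/2) with hp | hp
  · have hmin : min p (1 - p) = p := min_eq_left (by linarith)
    have := key_binEntropy p h0 hp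
    rw [hmin]; linarith
  · have hmin : min p (1 - p) = 1 - p := min_eq_right (by linarith)
    have := key_binEntropy (1 - p) (by linarith) (by linarith)
    rw [Real.binEntropy_one_sub] at this
    rw [hmin]; linarith
end

section
/- Let m ≥ 1 and let p_1, …, p_m be nonnegative real numbers with ∑_{i=1}^{m} p_i = 1. Then 1 − max_{1 ≤ i ≤ m} p_i ≤ (1/2) · ∑_{i=1}^{m} ( −p_i · log₂ p_i ), i.e., one minus the largest probability is at most half the Shannon entropy of the distribution (p_1, …, p_m). -/
open Real Finset

-- Lemma A: for 0 < x ≤ t ≤ 1/2, -log₂ x ≥ 2(1-t)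
lemma auxA (x t : ℝ) (hx : 0 < x) (hxt : x ≤ t) (ht : t ≤ 1/2) :
    2 * (1 - t) ≤ -(Real.logb 2 x) := by
  have ht0 : 0 < t := lt_of_lt_of_le hx hxt
  have h1 : Real.log x ≤ Real.log t := Real.log_le_log hx hxt
  have h2 : Real.log (2 * t) ≤ 2 * t - 1 := Real.log_le_sub_one_of_pos (by linarith)
  have h3 : Real.log (2 * t) = Real.log 2 + Real.log t := Real.log_mul (by norm_num) (ne_of_gt ht0)
  have hL1 : Real.log 2 < 0.6931471808 := Real.log_two_lt_d9
  have hL0 : (0.6931471803 : ℝ) < Real.log 2 := Real.log_two_gt_d9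
  have hlog2 : (0:ℝ) < Real.log 2 := by linarith
  have h6 : Real.log x / Real.log 2 ≤ 2 * (t - 1) := by
    rw [div_le_iff₀ hlog2]; nlinarith
  have h5 : Real.logb 2 x = Real.log x / Real.log 2 := rfl
  linarith [h5 ▸ h6]

-- Lemma B: for 1/2 ≤ q ≤ 1, -q log₂ q ≥ 2(1-q)²
lemma auxB (q : ℝ) (h1 : 1/2 ≤ q) (h2 : q ≤ 1) :
    2 * (1 - q)^2 ≤ -(q * Real.logb 2 q) := by
  have hq0 : 0 < q := by linarith
  have hL1 : Real.log 2 < 0.6931471808 := Real.log_two_lt_d9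
  have hL0 : (0.6931471803 : ℝ) < Real.log 2 := Real.log_two_gt_d9
  have hlog2 : (0:ℝ) < Real.log 2 := by linarith
  have key : -(q * Real.log q) ≥ 2 * Real.log 2 * (1 - q)^2 := by
    rcases le_or_gt q (3/4) with hc | hc
    · have h3 : Real.log (2 * q) = Real.log 2 + Real.log q := Real.log_mul (by norm_num) (ne_of_gt hq0)
      have h4 : Real.log (2 * q) ≤ 2 * q - 1 := Real.log_le_sub_one_of_pos (by linarith)
      nlinarith [sq_nonneg (q - 1/2), sq_nonneg (q - 3/4), mul_nonneg (sub_nonneg.mpr h1) (sub_nonneg.mpr hc)]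
    · have h4 : Real.log q ≤ q - 1 := Real.log_le_sub_one_of_pos hq0
      nlinarith [sq_nonneg (1 - q)]
  have h5 : Real.logb 2 q = Real.log q / Real.log 2 := rfl
  have heq : -(q * Real.logb 2 q) = (-(q * Real.log q)) / Real.log 2 := by
    rw [h5]; ring
  rw [heq, le_div_iff₀ hlog2]
  nlinarith [key]

/-- If `p₁, …, p_m` (`m ≥ 1`) are nonnegative reals summing to `1`, then
`1 − max_i p_i ≤ (1/2) · ∑ᵢ (−p_i log₂ p_i)`, i.e. one minus the largest probability is at
most half the Shannon entropy (base 2, with `0 · log₂ 0 = 0`, matching `Real.logb 2 0 = 0`). -/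
theorem one_sub_max_le_half_entropy (m : ℕ) (hm : 1 ≤ m) (p : Fin m → ℝ)
    (hp0 : ∀ i, 0 ≤ p i) (hp1 : ∑ i, p i = 1) :
    1 - Finset.univ.sup' ⟨⟨0, hm⟩, Finset.mem_univ _⟩ p ≤
      (1 / 2) * ∑ i, -(p i * Real.logb 2 (p i)) := by
  set q := Finset.univ.sup' ⟨⟨0, hm⟩, Finset.mem_univ _⟩ p with hq
  obtain ⟨j, -, hj⟩ := Finset.exists_mem_eq_sup' ⟨⟨0, hm⟩, Finset.mem_univ _⟩ p
  have hle : ∀ i, p i ≤ q := fun i => Finset.le_sup' p (Finset.mem_univ i)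
  have hqj : q = p j := hj
  have hq1 : q ≤ 1 := by
    rw [hqj, ← hp1]
    exact Finset.single_le_sum (fun i _ => hp0 i) (Finset.mem_univ j)
  have main : 2 * (1 - q) ≤ ∑ i, -(p i * Real.logb 2 (p i)) := by
    rcases le_or_gt q (1/2) with hc | hc
    · -- every pᵢ ≤ 1/2
      have step : ∀ i ∈ Finset.univ, 2 * (1 - q) * p i ≤ -(p i * Real.logb 2 (p i)) := by
        intro i _
        rcases eq_or_lt_of_le (hp0 i) with h0 | h0
        · simp [← h0]
        · have := auxA (p i) q h0 (hle i) hc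
          nlinarith
      calc 2 * (1 - q) = ∑ i, 2 * (1 - q) * p i := by
            rw [← Finset.mul_sum, hp1, mul_one]
        _ ≤ _ := Finset.sum_le_sum step
    · -- q > 1/2 : split off the max term
      have hsplit : ∑ i ∈ Finset.univ.erase j, p i = 1 - q := by
        have := Finset.sum_erase_add Finset.univ p (Finset.mem_univ j)
        rw [hp1] at this; rw [hqj]; linarith
      have hrest : ∀ i ∈ Finset.univ.erase j, p i ≤ 1 - q := by
        intro i hi
        rw [← hsplit]
        exact Finset.single_le_sum (fun k _ => hp0 k) hi
      have hterm : 2 * (1 - q)^2 ≤ -(p j * Real.logb 2 (p j)) := by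
        rw [← hqj]; exact auxB q hc.le hq1
      have hrestsum : 2 * q * (1 - q) ≤ ∑ i ∈ Finset.univ.erase j, -(p i * Real.logb 2 (p i)) := by
        have step : ∀ i ∈ Finset.univ.erase j, 2 * q * p i ≤ -(p i * Real.logb 2 (p i)) := by
          intro i hi
          rcases eq_or_lt_of_le (hp0 i) with h0 | h0
          · simp [← h0]
          · have h1q : p i ≤ 1 - q := hrest i hi
            have := auxA (p i) (1 - q) h0 h1q (by linarith)
            nlinarith
        calc 2 * q * (1 - q) = ∑ i ∈ Finset.univ.erase j, 2 * q * p i := by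
              rw [← Finset.mul_sum, hsplit]
          _ ≤ _ := Finset.sum_le_sum step
      have := Finset.sum_erase_add Finset.univ (fun i => -(p i * Real.logb 2 (p i))) (Finset.mem_univ j)
      beta_reduce at this
      nlinarith
  linarith
end
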